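/- Fix σ₀² > 0, η₀² ≥ 0 and λ_1 ≥ ... ≥ λ_n ≥ 0. Define H₀(η²) = (σ₀²/n)Σ_i λ_i(η₀²λ_i+1)/(η²λ_i+1)² − σ₀² · ((1/n)Σ_i λ_i/(η²λ_i+1)) · ((1/n)Σ_i (η₀²λ_i+1)/(η²λ_i+1)). Then for every η² ≥ 0, H₀(η²) = (σ₀²/(2n²)) Σ_{i,j} (η₀² − η²)(λ_i − λ_j)² / ((η²λ_i+1)²(η²λ_j+1)²). -/

import Mathlib

/-- Closed form for the expected profile score `H₀(η²)` in a linear random-effects model. -/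
theorem stmt3 {n : ℕ} (hn : 0 < n) (σ0sq η0sq : ℝ) (hσ : 0 < σ0sq) (hη0 : 0 ≤ η0sq)
    (lam : Fin n → ℝ) (hdec : Antitone lam) (hnn : ∀ i, 0 ≤ lam i)
    (ηsq : ℝ) (hη : 0 ≤ ηsq) :
    (σ0sq / n) * ∑ i, lam i * (η0sq * lam i + 1) / (ηsq * lam i + 1) ^ 2
      - σ0sq * ((1 / (n : ℝ)) * ∑ i, lam i / (ηsq * lam i + 1))
          * ((1 / (n : ℝ)) * ∑ i, (η0sq * lam i + 1) / (ηsq * lam i + 1))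
    = (σ0sq / (2 * (n : ℝ) ^ 2)) * ∑ i, ∑ j,
        (η0sq - ηsq) * (lam i - lam j) ^ 2
          / ((ηsq * lam i + 1) ^ 2 * (ηsq * lam j + 1) ^ 2) := by
  have hd : ∀ i, (ηsq * lam i + 1) ≠ 0 := by
    intro i
    have := mul_nonneg hη (hnn i)
    nlinarith
  set g : Fin n → ℝ := fun i => lam i * (η0sq * lam i + 1) / (ηsq * lam i + 1) ^ 2 with hg
  set p : Fin n → ℝ := fun i => lam i / (ηsq * lam i + 1) with hp
  set q : Fin n → ℝ := fun i => (η0sq * lam i + 1) / (ηsq * lam i + 1) with hq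
  have key : ∀ i j, (η0sq - ηsq) * (lam i - lam j) ^ 2
      / ((ηsq * lam i + 1) ^ 2 * (ηsq * lam j + 1) ^ 2)
      = g i + g j - p i * q j - p j * q i := by
    intro i j
    have hi := hd i
    have hj := hd j
    simp only [hg, hp, hq]
    field_simp
    ring
  have hsum : ∑ i, ∑ j, (η0sq - ηsq) * (lam i - lam j) ^ 2
      / ((ηsq * lam i + 1) ^ 2 * (ηsq * lam j + 1) ^ 2)
      = 2 * n * (∑ i, g i) - 2 * (∑ i, p i) * (∑ i, q i) := by
    have : ∀ i : Fin n, ∑ j, (g i + g j - p i * q j - p j * q i)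
        = n * g i + (∑ j, g j) - p i * (∑ j, q j) - (∑ j, p j) * q i := by
      intro i
      rw [show (fun j => g i + g j - p i * q j - p j * q i)
        = fun j => (g i + g j) - (p i * q j + p j * q i) from by funext j; ring]
      rw [Finset.sum_sub_distrib, Finset.sum_add_distrib, Finset.sum_add_distrib,
        Finset.sum_const, ← Finset.mul_sum, ← Finset.sum_mul]
      simp [Finset.card_univ]
      ring
    calc ∑ i, ∑ j, (η0sq - ηsq) * (lam i - lam j) ^ 2
        / ((ηsq * lam i + 1) ^ 2 * (ηsq * lam j + 1) ^ 2)
        = ∑ i, ∑ j, (g i + g j - p i * q j - p j * q i) := by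
          exact Finset.sum_congr rfl fun i _ => Finset.sum_congr rfl fun j _ => key i j
      _ = ∑ i, ((n : ℝ) * g i + (∑ j, g j) - p i * (∑ j, q j) - (∑ j, p j) * q i) := by
          exact Finset.sum_congr rfl fun i _ => this i
      _ = 2 * n * (∑ i, g i) - 2 * (∑ i, p i) * (∑ i, q i) := by
          rw [show (fun i => (n : ℝ) * g i + (∑ j, g j) - p i * (∑ j, q j) - (∑ j, p j) * q i)
            = fun i => ((n : ℝ) * g i + (∑ j, g j)) - (p i * (∑ j, q j) + (∑ j, p j) * q i)
            from by funext i; ring]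
          rw [Finset.sum_sub_distrib, Finset.sum_add_distrib, Finset.sum_add_distrib,
            Finset.sum_const, ← Finset.mul_sum, ← Finset.sum_mul, ← Finset.mul_sum]
          simp [Finset.card_univ]
          ring
  rw [hsum]
  have hn' : (n : ℝ) ≠ 0 := Nat.cast_ne_zero.mpr hn.ne'
  field_simp
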